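/- For every real d > 0 one has the strict inequality ∫_{arsinh d}^{arsinh(d+1)} (sinh x)² / √((sinh x)² − d²) dx < (d + 1) · log((√(1 + (d+1)²) + √(2d + 1)) / √(1 + d²)). -/

import Mathlib

open Real MeasureTheory

theorem catenoid_I1_bound :
    ∀ d : ℝ, 0 < d →
      (∫ x in Set.Ioc (Real.arsinh d) (Real.arsinh (d + 1)),
          (Real.sinh x) ^ 2 / Real.sqrt ((Real.sinh x) ^ 2 - d ^ 2))
        < (d + 1) * Real.log ((Real.sqrt (1 + (d + 1) ^ 2) + Real.sqrt (2 * d + 1))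
            / Real.sqrt (1 + d ^ 2)) := by
  intro d hd
  set a := Real.arsinh d with ha
  set b := Real.arsinh (d + 1) with hb
  have hab : a < b := Real.arsinh_lt_arsinh.mpr (by linarith)
  set f : ℝ → ℝ := fun x => (Real.sinh x) ^ 2 / Real.sqrt ((Real.sinh x) ^ 2 - d ^ 2) with hf_def
  set g : ℝ → ℝ := fun x => (d + 1) * (Real.sinh x / Real.sqrt ((Real.sinh x) ^ 2 - d ^ 2))
    with hg_def
  -- positivity of the RHS
  have hD : (0:ℝ) < Real.sqrt (1 + d ^ 2) := Real.sqrt_pos.mpr (by positivity)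
  have hN : Real.sqrt (1 + d ^ 2) < Real.sqrt (1 + (d + 1) ^ 2) + Real.sqrt (2 * d + 1) := by
    have h1 : Real.sqrt (1 + d ^ 2) < Real.sqrt (1 + (d + 1) ^ 2) := by
      apply Real.sqrt_lt_sqrt (by positivity); nlinarith
    have h2 : (0:ℝ) < Real.sqrt (2 * d + 1) := Real.sqrt_pos.mpr (by linarith)
    linarith
  have hRpos : 0 < (d + 1) * Real.log ((Real.sqrt (1 + (d + 1) ^ 2) + Real.sqrt (2 * d + 1))
      / Real.sqrt (1 + d ^ 2)) := by
    apply mul_pos (by linarith)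
    apply Real.log_pos
    rw [lt_div_iff₀ hD]; linarith
  by_cases hf : IntegrableOn f (Set.Ioc a b) volume
  · -- main case
    -- basic facts on the interval
    have hsinh_pos : ∀ x ∈ Set.Ioc a b, d < Real.sinh x := by
      intro x hx
      have := Real.sinh_lt_sinh.mpr hx.1
      rwa [Real.sinh_arsinh] at this
    have hsinh_le : ∀ x ∈ Set.Ioc a b, Real.sinh x ≤ d + 1 := by
      intro x hx
      have := Real.sinh_le_sinh.mpr hx.2
      rwa [Real.sinh_arsinh] at this
    have hsq_pos : ∀ x ∈ Set.Ioc a b, 0 < (Real.sinh x) ^ 2 - d ^ 2 := by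
      intro x hx
      have h1 := hsinh_pos x hx
      nlinarith
    -- g is integrable (dominated by ((d+1)/d) * f)
    have hg_meas : AEStronglyMeasurable g (volume.restrict (Set.Ioc a b)) := by
      apply Measurable.aestronglyMeasurable
      apply Measurable.mul measurable_const
      exact (Real.measurable_sinh).div
        ((continuous_sqrt.measurable).comp ((Real.measurable_sinh.pow_const 2).sub measurable_const))
    have hg_int : IntegrableOn g (Set.Ioc a b) volume := by
      apply Integrable.mono' (hf.const_mul ((d + 1) / d)) hg_meas
      rw [ae_restrict_iff' measurableSet_Ioc]
      filter_upwards with x hx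
      have h1 := hsinh_pos x hx
      have h2 := hsq_pos x hx
      have hs : 0 < Real.sqrt ((Real.sinh x) ^ 2 - d ^ 2) := Real.sqrt_pos.mpr h2
      have hsx : Real.sinh x ≠ 0 := by linarith
      have hgx : g x = ((d + 1) / Real.sinh x) * f x := by
        simp only [hg_def, hf_def]
        field_simp
      rw [Real.norm_eq_abs, abs_of_nonneg]
      · rw [hgx]
        have hfx : 0 ≤ f x := by positivity
        apply mul_le_mul_of_nonneg_right _ hfx |>.trans_eq rfl
        apply div_le_div_of_nonneg_left (by linarith) hd h1.le
      · apply mul_nonneg (by linarith)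
        exact div_nonneg (by linarith) hs.le
    -- strict inequality of integrals: ∫ f < ∫ g
    have hlt : (∫ x in Set.Ioc a b, f x) < ∫ x in Set.Ioc a b, g x := by
      have hsub : 0 < ∫ x in Set.Ioc a b, (g x - f x) := by
        rw [setIntegral_pos_iff_support_of_nonneg_ae]
        · have hsub2 : Set.Ioo a b ⊆ (Function.support fun x => g x - f x) ∩ Set.Ioc a b := by
            intro x hx
            refine ⟨?_, Set.Ioo_subset_Ioc_self hx⟩
            have hx' : x ∈ Set.Ioc a b := Set.Ioo_subset_Ioc_self hx
            have h1 := hsinh_pos x hx'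
            have h2lt : Real.sinh x < d + 1 := by
              have := Real.sinh_lt_sinh.mpr hx.2
              rwa [Real.sinh_arsinh] at this
            have hs : 0 < Real.sqrt ((Real.sinh x) ^ 2 - d ^ 2) :=
              Real.sqrt_pos.mpr (hsq_pos x hx')
            have hfeq : f x = Real.sinh x * (Real.sinh x / Real.sqrt ((Real.sinh x) ^ 2 - d ^ 2)) := by
              simp only [hf_def]; ring
            have hflt : f x < g x := by
              rw [hfeq]
              simp only [hg_def]
              exact mul_lt_mul_of_pos_right h2lt (div_pos (by linarith) hs)
            simp only [Function.mem_support]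
            exact sub_ne_zero_of_ne (ne_of_gt hflt)
          have h0 : (0:ENNReal) < volume (Set.Ioo a b) := by
            rw [Real.volume_Ioo]
            exact ENNReal.ofReal_pos.mpr (sub_pos.mpr hab)
          exact lt_of_lt_of_le h0 (measure_mono hsub2)
        · filter_upwards [MeasureTheory.ae_restrict_mem measurableSet_Ioc] with x hx
          have h1 := hsinh_pos x hx
          have h2 := hsinh_le x hx
          have hs : 0 < Real.sqrt ((Real.sinh x) ^ 2 - d ^ 2) := Real.sqrt_pos.mpr (hsq_pos x hx)
          have hfeq : f x = Real.sinh x * (Real.sinh x / Real.sqrt ((Real.sinh x) ^ 2 - d ^ 2)) := by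
            simp only [hf_def]; ring
          simp only [Pi.zero_apply, sub_nonneg]
          rw [hfeq]
          simp only [hg_def]
          exact mul_le_mul_of_nonneg_right (by linarith) (div_nonneg (by linarith) hs.le)
        · exact hg_int.sub hf
      have := MeasureTheory.integral_sub hg_int hf
      linarith [this ▸ hsub]
    -- compute ∫ g via FTC
    set F : ℝ → ℝ := fun x => (d + 1) * Real.log (Real.cosh x
      + Real.sqrt ((Real.sinh x) ^ 2 - d ^ 2)) with hF_def
    have hFcont : ContinuousOn F (Set.Icc a b) := by
      apply ContinuousOn.mul continuousOn_const
      apply ContinuousOn.log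
      · apply Continuous.continuousOn
        exact Real.continuous_cosh.add
          (continuous_sqrt.comp ((Real.continuous_sinh.pow 2).sub continuous_const))
      · intro x hx
        have : 0 < Real.cosh x := Real.cosh_pos x
        have : 0 ≤ Real.sqrt ((Real.sinh x) ^ 2 - d ^ 2) := Real.sqrt_nonneg _
        positivity
    have hFderiv : ∀ x ∈ Set.Ioo a b, HasDerivAt F (g x) x := by
      intro x hx
      have h1 : d < Real.sinh x := by
        have := Real.sinh_lt_sinh.mpr hx.1; rwa [Real.sinh_arsinh] at this
      have h2 : 0 < (Real.sinh x) ^ 2 - d ^ 2 := by nlinarith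
      have hs : 0 < Real.sqrt ((Real.sinh x) ^ 2 - d ^ 2) := Real.sqrt_pos.mpr h2
      have hu : HasDerivAt (fun y => (Real.sinh y) ^ 2 - d ^ 2)
          (2 * Real.sinh x * Real.cosh x) x := by
        have := ((Real.hasDerivAt_sinh x).pow 2).sub_const (d ^ 2)
        refine this.congr_deriv ?_
        norm_num
      have hsqrt : HasDerivAt (fun y => Real.sqrt ((Real.sinh y) ^ 2 - d ^ 2))
          (1 / (2 * Real.sqrt ((Real.sinh x) ^ 2 - d ^ 2)) * (2 * Real.sinh x * Real.cosh x)) x :=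
        (Real.hasDerivAt_sqrt h2.ne').comp x hu
      have hinner : HasDerivAt (fun y => Real.cosh y + Real.sqrt ((Real.sinh y) ^ 2 - d ^ 2))
          (Real.sinh x + 1 / (2 * Real.sqrt ((Real.sinh x) ^ 2 - d ^ 2))
            * (2 * Real.sinh x * Real.cosh x)) x :=
        (Real.hasDerivAt_cosh x).add hsqrt
      have hpos : 0 < Real.cosh x + Real.sqrt ((Real.sinh x) ^ 2 - d ^ 2) := by
        have := Real.cosh_pos x; linarith [Real.sqrt_nonneg ((Real.sinh x) ^ 2 - d ^ 2)]
      have hlog := (hinner.log hpos.ne').const_mul (d + 1)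
      refine hlog.congr_deriv (Eq.symm ?_)
      simp only [hg_def]
      have hsq : Real.sqrt ((Real.sinh x) ^ 2 - d ^ 2) ^ 2 = (Real.sinh x) ^ 2 - d ^ 2 :=
        Real.sq_sqrt h2.le
      have hcosh : Real.cosh x ^ 2 = 1 + Real.sinh x ^ 2 := by
        rw [Real.cosh_sq']
      field_simp
      nlinarith [hs, hpos]
    have hgInterval : IntervalIntegrable g volume a b :=
      (intervalIntegrable_iff_integrableOn_Ioc_of_le hab.le).mpr hg_int
    have hFTC : (∫ x in Set.Ioc a b, g x) = F b - F a := by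
      rw [← intervalIntegral.integral_of_le hab.le]
      exact intervalIntegral.integral_eq_sub_of_hasDeriv_right_of_le hab.le hFcont
        (fun x hx => (hFderiv x hx).hasDerivWithinAt) hgInterval
    -- compute F b - F a
    have hFa : F a = (d + 1) * Real.log (Real.sqrt (1 + d ^ 2)) := by
      simp only [hF_def, ha, Real.cosh_arsinh, Real.sinh_arsinh, sub_self, Real.sqrt_zero,
        add_zero]
    have hFb : F b = (d + 1) * Real.log (Real.sqrt (1 + (d + 1) ^ 2) + Real.sqrt (2 * d + 1)) := by
      simp only [hF_def, hb, Real.cosh_arsinh, Real.sinh_arsinh]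
      ring_nf
    have hFsub : F b - F a = (d + 1) * Real.log ((Real.sqrt (1 + (d + 1) ^ 2)
        + Real.sqrt (2 * d + 1)) / Real.sqrt (1 + d ^ 2)) := by
      rw [hFa, hFb, ← mul_sub, ← Real.log_div (by linarith) hD.ne']
    calc (∫ x in Set.Ioc a b, f x) < ∫ x in Set.Ioc a b, g x := hlt
      _ = F b - F a := hFTC
      _ = _ := hFsub
  · rw [MeasureTheory.integral_undef hf]
    exact hRpos
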